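/- Let Ω ⊆ ℝⁿ be open and satisfy the ε-ball condition, let a, x ∈ ∂Ω, and set (x − a)' = (x − a) − ⟨x − a, d_a⟩ d_a. If ‖(x − a)'‖ < ε and |⟨x − a, d_a⟩| < ε, then ‖x − a‖²/(2ε) ≤ ε − √(ε² − ‖(x − a)'‖²). -/
import Mathlib


open Metric
open scoped RealInnerProductSpace

set_option maxHeartbeats 1000000 in
/-- Local inequality: with `(x − a)' = (x − a) − ⟨x − a, d_a⟩ d_a`, if `‖(x − a)'‖ < ε` and
`|⟨x − a, d_a⟩| < ε`, then `‖x − a‖²/(2ε) ≤ ε − √(ε² − ‖(x − a)'‖²)`. -/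
theorem stmt_2 {n : ℕ} (hn : 2 ≤ n) (ε : ℝ) (hε : 0 < ε)
    (Ω : Set (EuclideanSpace ℝ (Fin n))) (hΩ : IsOpen Ω)
    (a x : EuclideanSpace ℝ (Fin n)) (ha : a ∈ frontier Ω) (hx : x ∈ frontier Ω)
    (da : EuclideanSpace ℝ (Fin n)) (hda : ‖da‖ = 1)
    (ha1 : ball (a - ε • da) ε ⊆ Ω) (ha2 : ball (a + ε • da) ε ⊆ (closure Ω)ᶜ)
    (p : EuclideanSpace ℝ (Fin n)) (hp : p = (x - a) - ⟪x - a, da⟫ • da)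
    (hp' : ‖p‖ < ε) (hsc : |(⟪x - a, da⟫)| < ε) :
    ‖x - a‖ ^ 2 / (2 * ε) ≤ ε - Real.sqrt (ε ^ 2 - ‖p‖ ^ 2) := by
  set t : ℝ := ⟪x - a, da⟫ with ht
  have hxcl : x ∈ closure Ω := frontier_subset_closure hx
  have hxnΩ : x ∉ Ω := by
    rw [hΩ.frontier_eq] at hx
    exact hx.2
  have h1 : ε ≤ dist x (a - ε • da) := by
    by_contra h
    exact hxnΩ (ha1 (mem_ball.mpr (lt_of_not_ge h)))
  have h2 : ε ≤ dist x (a + ε • da) := by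
    by_contra h
    exact (ha2 (mem_ball.mpr (lt_of_not_ge h))) hxcl
  have hed : ‖(ε : ℝ) • da‖ = ε := by
    rw [norm_smul, hda, Real.norm_eq_abs, abs_of_pos hε, mul_one]
  have hd1 : dist x (a - ε • da) = ‖(x - a) + ε • da‖ := by
    rw [dist_eq_norm]
    congr 1
    abel
  have hd2 : dist x (a + ε • da) = ‖(x - a) - ε • da‖ := by
    rw [dist_eq_norm]
    congr 1
    abel
  have e1 : ‖(x - a) + ε • da‖ ^ 2 = ‖x - a‖ ^ 2 + 2 * (ε * t) + ε ^ 2 := by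
    rw [norm_add_sq_real, real_inner_smul_right, hed, ← ht]
  have e2 : ‖(x - a) - ε • da‖ ^ 2 = ‖x - a‖ ^ 2 - 2 * (ε * t) + ε ^ 2 := by
    rw [norm_sub_sq_real, real_inner_smul_right, hed, ← ht]
  have q1 : ε ^ 2 ≤ ‖x - a‖ ^ 2 + 2 * (ε * t) + ε ^ 2 := by
    rw [← e1]
    have := h1.trans_eq hd1
    nlinarith [norm_nonneg ((x - a) + ε • da)]
  have q2 : ε ^ 2 ≤ ‖x - a‖ ^ 2 - 2 * (ε * t) + ε ^ 2 := by
    rw [← e2]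
    have := h2.trans_eq hd2
    nlinarith [norm_nonneg ((x - a) - ε • da)]
  have hip : ⟪p, da⟫ = 0 := by
    rw [hp]
    rw [inner_sub_left, real_inner_smul_left, real_inner_self_eq_norm_sq, hda]
    ring
  have hxa : x - a = p + t • da := by
    rw [hp]; abel
  have hpy : ‖x - a‖ ^ 2 = ‖p‖ ^ 2 + t ^ 2 := by
    rw [hxa, norm_add_sq_real, real_inner_smul_right, hip, norm_smul, hda,
      Real.norm_eq_abs, mul_one, sq_abs]
    ring
  set s : ℝ := Real.sqrt (ε ^ 2 - ‖p‖ ^ 2) with hs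
  have hs0 : 0 ≤ s := Real.sqrt_nonneg _
  have hs2 : s ^ 2 = ε ^ 2 - ‖p‖ ^ 2 :=
    Real.sq_sqrt (by nlinarith [norm_nonneg p, hp'])
  have key : ε ^ 2 - ‖p‖ ^ 2 ≤ (ε - |t|) ^ 2 := by
    rw [hpy] at q1 q2
    rcases abs_cases t with ⟨h, _⟩ | ⟨h, _⟩ <;> rw [h] <;> nlinarith
  have hsle : s ≤ ε - |t| := by
    have hpos : 0 ≤ ε - |t| := by linarith
    nlinarith [hs2, key, hs0, abs_nonneg t]
  rw [div_le_iff₀ (by positivity)]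
  nlinarith [sq_abs t, hpy, hs2, hsle, abs_nonneg t]
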